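/- Fix an integer n ≥ 1. Let ψ : ℝ → ℝ be (n−1)-times continuously differentiable such that for every θ ∈ ℤ the restriction of ψ to [θ/2, (θ+1)/2] coincides with a polynomial of degree at most n, with leading coefficient A_θ. Let η : ℝ → ℝ be integrable, vanishing outside (−2^{−5}, 2^{−5}), with ∫_ℝ y^M η(y) dy = 0 for every integer 0 ≤ M ≤ n+2. Then for every real number a ≥ 1 and every λ ∈ ℤ: ∫_ℝ η(a(y − λ/2)) ψ(y) dy = a^{−(n+1)} ( A_{λ−1} ∫_{−1/2}^{0} u^n η(u) du + A_λ ∫_{0}^{1/2} u^n η(u) du ). -/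

import Mathlib

open MeasureTheory Set Finset Real

open Polynomial


lemma aux_itd_poly (p : Polynomial ℝ) (k : ℕ) :
    iteratedDeriv k (fun x => p.eval x) = fun x => ((Polynomial.derivative)^[k] p).eval x := by
  induction k with
  | zero => simp
  | succ k ih =>
    rw [iteratedDeriv_succ, ih, Function.iterate_succ_apply']
    ext x
    exact Polynomial.deriv _

lemma aux_endpoint {m : ℕ} {ψ : ℝ → ℝ} (hψ : ContDiff ℝ m ψ) (p : Polynomial ℝ)
    {s r : ℝ} (hsr : s < r) (h : Set.EqOn ψ (fun x => p.eval x) (Set.Icc s r)) :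
    ∀ k ≤ m, ∀ x ∈ Set.Icc s r, iteratedDeriv k ψ x = ((Polynomial.derivative)^[k] p).eval x := by
  intro k hk x hx
  have h1 : Set.EqOn (iteratedDeriv k ψ) (iteratedDeriv k (fun x => p.eval x)) (Set.Ioo s r) :=
    (h.mono Set.Ioo_subset_Icc_self).iteratedDeriv_of_isOpen isOpen_Ioo k
  have hc1 : Continuous (iteratedDeriv k ψ) :=
    hψ.continuous_iteratedDeriv k (by exact_mod_cast hk)
  have hc2 : Continuous (iteratedDeriv k (fun x => p.eval x)) := by
    rw [aux_itd_poly]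
    exact Polynomial.continuous _
  have h2 := h1.closure hc1 hc2
  rw [closure_Ioo hsr.ne] at h2
  have := h2 hx
  rw [aux_itd_poly] at this
  exact this

lemma aux_polyB (Q : Polynomial ℝ) (t : ℝ) (n : ℕ) (hdeg : Q.natDegree ≤ n)
    (hder : ∀ k < n, ((Polynomial.derivative)^[k] Q).eval t = 0) :
    Q = Polynomial.C (Q.coeff n) * (Polynomial.X - Polynomial.C t) ^ n := by
  have key : taylor t Q = Polynomial.C (Q.coeff n) * Polynomial.X ^ n := by
    ext i
    rw [taylor_coeff]
    rcases lt_trichotomy i n with hi | hi | hi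
    · have h1 : (i.factorial : ℝ) * (hasseDeriv i Q).eval t = 0 := by
        have := congrFun (factorial_smul_hasseDeriv (R := ℝ) (k := i)) Q
        calc (i.factorial : ℝ) * (hasseDeriv i Q).eval t
            = ((i.factorial • hasseDeriv i (R := ℝ)) Q).eval t := by
              simp [nsmul_eq_mul]
          _ = 0 := by rw [this]; exact hder i hi
      have h2 : (i.factorial : ℝ) ≠ 0 := Nat.cast_ne_zero.2 (Nat.factorial_ne_zero i)
      have h3 : (hasseDeriv i Q).eval t = 0 := by
        rcases mul_eq_zero.1 h1 with h | h
        · exact absurd h h2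
        · exact h
      rw [h3]
      simp [coeff_C_mul, coeff_X_pow, hi.ne]
    · subst hi
      have : hasseDeriv i Q = Polynomial.C (Q.coeff i) := by
        ext m
        rw [hasseDeriv_coeff]
        cases m with
        | zero => simp
        | succ m =>
          have : Q.coeff (m + 1 + i) = 0 :=
            Polynomial.coeff_eq_zero_of_natDegree_lt (by omega)
          simp [this, coeff_C]
      rw [this]
      simp
    · have h4 : (hasseDeriv i Q) = 0 :=
        hasseDeriv_eq_zero_of_lt_natDegree Q i (by omega)
      rw [h4]
      simp [coeff_C_mul, coeff_X_pow, hi.ne']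
  have hst := sum_taylor_eq Q t
  rw [key] at hst
  conv_lhs => rw [← hst]
  rw [Polynomial.sum_def]
  have hsupp : (Polynomial.C (Q.coeff n) * Polynomial.X ^ n).support ⊆ {n} := by
    intro i hi
    simp only [Finset.mem_singleton]
    by_contra hne
    exact (Polynomial.mem_support_iff.1 hi) (by simp [coeff_C_mul, coeff_X_pow, hne])
  rw [Finset.sum_subset hsupp]
  · simp [coeff_C_mul, coeff_X_pow]
  · intro i _ hi
    rw [Polynomial.notMem_support_iff.1 hi]
    simp

lemma aux_int (η : ℝ → ℝ) (hη : Integrable η)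
    (hsupp : ∀ y : ℝ, y ∉ Set.Ioo (-(1/32) : ℝ) (1/32) → η y = 0)
    (φ : ℝ → ℝ) (hφ : Continuous φ) :
    Integrable (fun u => φ u * η u) := by
  set c : ℝ → ℝ := fun u => max (-(1/2)) (min u (1/2)) with hc
  have hcc : Continuous c := continuous_const.max (continuous_id.min continuous_const)
  have hmem : ∀ u, c u ∈ Set.Icc (-(1/2) : ℝ) (1/2) := fun u =>
    ⟨le_max_left _ _, max_le (by norm_num) (min_le_right _ _)⟩
  have heq : (fun u => φ u * η u) = fun u => φ (c u) * η u := by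
    funext u
    by_cases h : η u = 0
    · simp [h]
    · have hu : u ∈ Set.Ioo (-(1/32):ℝ) (1/32) := by
        by_contra h'
        exact h (hsupp u h')
      have hcu : c u = u := by
        simp only [hc]
        rw [min_eq_left (by linarith [hu.2]), max_eq_right (by linarith [hu.1])]
      rw [hcu]
  obtain ⟨C, hC⟩ := (isCompact_Icc (a := (-(1/2):ℝ)) (b := 1/2)).exists_bound_of_continuousOn
    hφ.continuousOn
  rw [heq]
  exact hη.bdd_mul (c := C) (hφ.comp hcc).aestronglyMeasurable (Filter.Eventually.of_forall fun u => hC (c u) (hmem u))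

lemma aux_moment (n : ℕ) (η : ℝ → ℝ) (hη : Integrable η)
    (hsupp : ∀ y : ℝ, y ∉ Set.Ioo (-(1/32):ℝ) (1/32) → η y = 0)
    (hmom : ∀ M : ℕ, M ≤ n + 2 → ∫ y : ℝ, y ^ M * η y = 0)
    (p : Polynomial ℝ) (hp : p.natDegree ≤ n + 2) :
    ∫ u : ℝ, p.eval u * η u = 0 := by
  have h1 : (fun u => p.eval u * η u)
      = fun u => ∑ j ∈ Finset.range (n+3), p.coeff j * (u ^ j * η u) := by
    funext u
    rw [Polynomial.eval_eq_sum_range' (n := n+3) (by omega), Finset.sum_mul]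
    exact Finset.sum_congr rfl fun j _ => by ring
  rw [h1, integral_finset_sum]
  · refine Finset.sum_eq_zero fun j hj => ?_
    rw [MeasureTheory.integral_const_mul, hmom j (by simpa using Nat.lt_succ_iff.1 (Finset.mem_range.1 hj))]
    ring
  · intro j _
    exact (aux_int η hη hsupp (fun u => u ^ j) (continuous_pow j)).const_mul _

theorem stmt_13
    (n : ℕ) (hn : 1 ≤ n) (ψ : ℝ → ℝ)
    (hsmooth : ContDiff ℝ (n - 1 : ℕ) ψ)
    (A : ℤ → ℝ)
    (hpoly : ∀ θ : ℤ, ∃ c : ℕ → ℝ, c n = A θ ∧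
      ∀ x ∈ Set.Icc ((θ : ℝ) / 2) (((θ : ℝ) + 1) / 2),
        ψ x = ∑ j ∈ Finset.range (n + 1), c j * x ^ j)
    (η : ℝ → ℝ) (hη : MeasureTheory.Integrable η)
    (hηsupp : ∀ y : ℝ, y ∉ Set.Ioo (-(2 : ℝ) ^ (-5 : ℤ)) ((2 : ℝ) ^ (-5 : ℤ)) → η y = 0)
    (hηmom : ∀ M : ℕ, M ≤ n + 2 → ∫ y : ℝ, y ^ M * η y = 0) :
    ∀ a : ℝ, 1 ≤ a → ∀ lam : ℤ,
      ∫ y : ℝ, η (a * (y - (lam : ℝ) / 2)) * ψ y =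
        a ^ (-((n : ℤ) + 1)) *
          (A (lam - 1) * (∫ u in (-(1 / 2) : ℝ)..0, u ^ n * η u) +
           A lam * ∫ u in (0 : ℝ)..(1 / 2), u ^ n * η u) := by
  intro a ha lam
  have h32 : ((2:ℝ) ^ (-5:ℤ)) = 1/32 := by norm_num
  have hsupp : ∀ y : ℝ, y ∉ Set.Ioo (-(1/32) : ℝ) (1/32) → η y = 0 := by
    intro y hy
    apply hηsupp
    rwa [h32]
  have ha0 : (0:ℝ) < a := lt_of_lt_of_le one_pos ha
  have hainv0 : (0:ℝ) < a⁻¹ := inv_pos.2 ha0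
  have hainv1 : a⁻¹ ≤ 1 := by
    rw [inv_le_one_iff₀]
    right; exact ha
  set t : ℝ := (lam : ℝ)/2 with ht
  obtain ⟨c₁, hc₁n, hc₁⟩ := hpoly (lam - 1)
  obtain ⟨c₂, hc₂n, hc₂⟩ := hpoly lam
  set P₁ : Polynomial ℝ := ∑ j ∈ Finset.range (n+1), Polynomial.C (c₁ j) * Polynomial.X ^ j
    with hP₁
  set P₂ : Polynomial ℝ := ∑ j ∈ Finset.range (n+1), Polynomial.C (c₂ j) * Polynomial.X ^ j
    with hP₂
  have hevalP₁ : ∀ x : ℝ, P₁.eval x = ∑ j ∈ Finset.range (n+1), c₁ j * x ^ j := by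
    intro x; simp [hP₁, Polynomial.eval_finset_sum]
  have hevalP₂ : ∀ x : ℝ, P₂.eval x = ∑ j ∈ Finset.range (n+1), c₂ j * x ^ j := by
    intro x; simp [hP₂, Polynomial.eval_finset_sum]
  have hψ₁ : Set.EqOn ψ (fun x => P₁.eval x) (Set.Icc (t - 1/2) t) := by
    intro x hx
    simp only
    rw [hevalP₁]
    apply hc₁
    obtain ⟨h1, h2⟩ := hx
    constructor
    · push_cast; linarith
    · push_cast; linarith
  have hψ₂ : Set.EqOn ψ (fun x => P₂.eval x) (Set.Icc t (t + 1/2)) := by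
    intro x hx
    simp only
    rw [hevalP₂]
    apply hc₂
    obtain ⟨h1, h2⟩ := hx
    constructor
    · push_cast; linarith
    · push_cast; linarith
  have hdegP₁ : P₁.natDegree ≤ n := by
    apply Polynomial.natDegree_sum_le_of_forall_le
    intro j hj
    refine le_trans (Polynomial.natDegree_C_mul_le _ _) ?_
    rw [Polynomial.natDegree_X_pow]
    exact Nat.lt_succ_iff.1 (Finset.mem_range.1 hj)
  have hdegP₂ : P₂.natDegree ≤ n := by
    apply Polynomial.natDegree_sum_le_of_forall_le
    intro j hj
    refine le_trans (Polynomial.natDegree_C_mul_le _ _) ?_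
    rw [Polynomial.natDegree_X_pow]
    exact Nat.lt_succ_iff.1 (Finset.mem_range.1 hj)
  have hcoeffP₁ : P₁.coeff n = A (lam - 1) := by
    rw [← hc₁n, hP₁, Polynomial.finset_sum_coeff]
    simp [Polynomial.coeff_C_mul, Polynomial.coeff_X_pow]
  have hcoeffP₂ : P₂.coeff n = A lam := by
    rw [← hc₂n, hP₂, Polynomial.finset_sum_coeff]
    simp [Polynomial.coeff_C_mul, Polynomial.coeff_X_pow]
  set Q : Polynomial ℝ := P₂ - P₁ with hQdef
  set d : ℝ := A lam - A (lam - 1) with hd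
  have hcoeffQ : Q.coeff n = d := by
    rw [hQdef, Polynomial.coeff_sub, hcoeffP₁, hcoeffP₂]
  have hder : ∀ k < n, ((Polynomial.derivative)^[k] Q).eval t = 0 := by
    intro k hk
    have hk' : k ≤ n - 1 := by omega
    have e1 := aux_endpoint hsmooth P₁ (by linarith : t - 1/2 < t) hψ₁ k hk' t
      ⟨by linarith, le_refl t⟩
    have e2 := aux_endpoint hsmooth P₂ (by linarith : t < t + 1/2) hψ₂ k hk' t
      ⟨le_refl t, by linarith⟩
    have hsub : (Polynomial.derivative)^[k] Q
        = (Polynomial.derivative)^[k] P₂ - (Polynomial.derivative)^[k] P₁ := by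
      rw [hQdef]; exact Polynomial.iterate_derivative_sub
    rw [hsub, Polynomial.eval_sub, ← e1, ← e2, sub_self]
  have hQ : Q = Polynomial.C d * (Polynomial.X - Polynomial.C t)^n := by
    rw [← hcoeffQ]
    exact aux_polyB Q t n
      (le_trans (Polynomial.natDegree_sub_le _ _) (max_le hdegP₂ hdegP₁)) hder
  set R : Polynomial ℝ := P₁.comp (Polynomial.C t + Polynomial.C a⁻¹ * Polynomial.X) with hR
  have hdegR : R.natDegree ≤ n := by
    refine le_trans Polynomial.natDegree_comp_le ?_
    have h1 : (Polynomial.C t + Polynomial.C a⁻¹ * Polynomial.X).natDegree ≤ 1 := by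
      refine le_trans (Polynomial.natDegree_add_le _ _) (max_le ?_ ?_)
      · simp
      · refine le_trans (Polynomial.natDegree_C_mul_le _ _) ?_
        simp
    calc P₁.natDegree * (Polynomial.C t + Polynomial.C a⁻¹ * Polynomial.X).natDegree
        ≤ n * 1 := Nat.mul_le_mul hdegP₁ h1
      _ = n := mul_one n
  have hRe : ∀ u : ℝ, R.eval u = P₁.eval (t + a⁻¹ * u) := by
    intro u; rw [hR, Polynomial.eval_comp]; simp
  have key : ∀ u : ℝ, η u * ψ (t + a⁻¹ * u)
      = R.eval u * η u
        + (d * a⁻¹ ^ n) * Set.indicator (Set.Ici (0:ℝ)) (fun v => v ^ n * η v) u := by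
    intro u
    by_cases h0 : η u = 0
    · rw [h0]
      rw [Set.indicator_apply]
      split
      · rw [h0]; ring
      · ring
    · have hu : u ∈ Set.Ioo (-(1/32):ℝ) (1/32) := by
        by_contra h'
        exact h0 (hsupp u h')
      obtain ⟨hul, hur⟩ := hu
      by_cases hu0 : 0 ≤ u
      · have hle : a⁻¹ * u ≤ u := by nlinarith
        have hx : t + a⁻¹ * u ∈ Set.Icc t (t + 1/2) := by
          constructor
          · nlinarith
          · nlinarith
        rw [hψ₂ hx]
        simp only
        have hP₂x : P₂.eval (t + a⁻¹*u) = P₁.eval (t + a⁻¹*u) + d * (a⁻¹*u)^n := by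
          have h2 : P₂ = P₁ + Q := by rw [hQdef]; ring
          rw [h2, Polynomial.eval_add, hQ]
          simp only [Polynomial.eval_mul, Polynomial.eval_pow, Polynomial.eval_sub,
            Polynomial.eval_C, Polynomial.eval_X, Polynomial.eval_add]
          ring
        rw [hP₂x, ← hRe, Set.indicator_apply, if_pos (Set.mem_Ici.2 hu0)]
        rw [mul_pow]
        ring
      · push_neg at hu0
        have hge : u ≤ a⁻¹ * u := by nlinarith
        have hx : t + a⁻¹ * u ∈ Set.Icc (t - 1/2) t := by
          constructor
          · nlinarith
          · nlinarith
        rw [hψ₁ hx]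
        simp only
        rw [← hRe, Set.indicator_apply, if_neg (by simp only [Set.mem_Ici, not_le]; exact hu0)]
        ring
  have HR : Integrable (fun u => R.eval u * η u) :=
    aux_int η hη hsupp _ R.continuous
  have Hn : Integrable (fun u : ℝ => u ^ n * η u) :=
    aux_int η hη hsupp _ (continuous_pow n)
  have Hind : Integrable (Set.indicator (Set.Ici (0:ℝ)) (fun v => v ^ n * η v)) :=
    Hn.indicator measurableSet_Ici
  have hIici : ∫ u : ℝ, Set.indicator (Set.Ici (0:ℝ)) (fun v => v ^ n * η v) u
      = ∫ u in (0:ℝ)..(1/2), u ^ n * η u := by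
    have hind_eq : Set.indicator (Set.Ici (0:ℝ)) (fun v => v ^ n * η v)
        = Set.indicator (Set.Ioc (0:ℝ) (1/2)) (fun v => v ^ n * η v) := by
      funext u
      by_cases h1 : u ∈ Set.Ioc (0:ℝ) (1/2)
      · rw [Set.indicator_apply, Set.indicator_apply, if_pos h1,
          if_pos (Set.mem_Ici.2 (le_of_lt h1.1))]
      · rw [Set.indicator_apply, Set.indicator_apply, if_neg h1]
        by_cases h2 : u ∈ Set.Ici (0:ℝ)
        · rw [if_pos h2]
          have h2' : (0:ℝ) ≤ u := h2
          rcases eq_or_lt_of_le h2' with h | h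
          · rw [← h, zero_pow (by omega : n ≠ 0), zero_mul]
          · have h3 : ¬ u ≤ (1:ℝ)/2 := fun hc => h1 ⟨h, hc⟩
            push_neg at h3
            rw [hsupp u (by
              simp only [Set.mem_Ioo, not_and_or, not_lt]
              right; linarith)]
            ring
        · rw [if_neg h2]
    rw [hind_eq, MeasureTheory.integral_indicator measurableSet_Ioc,
      intervalIntegral.integral_of_le (by norm_num : (0:ℝ) ≤ 1/2)]
  have hKI : (∫ u in (-(1/2):ℝ)..0, u ^ n * η u)
      = - ∫ u in (0:ℝ)..(1/2), u ^ n * η u := by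
    have h0 : ∫ u : ℝ, u ^ n * η u = 0 := hηmom n (by omega)
    have hsplit : (fun u : ℝ => u ^ n * η u)
        = Set.indicator (Set.Ioc (-(1/2):ℝ) (1/2)) (fun v => v ^ n * η v) := by
      funext u
      by_cases h1 : u ∈ Set.Ioc (-(1/2):ℝ) (1/2)
      · rw [Set.indicator_apply, if_pos h1]
      · rw [Set.indicator_apply, if_neg h1, hsupp u ?_]
        · ring
        · simp only [Set.mem_Ioc, not_and_or, not_lt, not_le] at h1
          simp only [Set.mem_Ioo, not_and_or, not_lt]
          rcases h1 with h | h
          · left; linarith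
          · right; linarith
    have h2 : ∫ u : ℝ, u ^ n * η u = ∫ u in (-(1/2):ℝ)..(1/2), u ^ n * η u := by
      rw [intervalIntegral.integral_of_le (by norm_num : (-(1/2):ℝ) ≤ 1/2),
        ← MeasureTheory.integral_indicator measurableSet_Ioc]
      exact congrArg _ hsplit
    have hadd := intervalIntegral.integral_add_adjacent_intervals
      (a := (-(1/2):ℝ)) (b := 0) (c := 1/2) (f := fun u => u ^ n * η u)
      (Hn.intervalIntegrable) (Hn.intervalIntegrable)
    have : (∫ u in (-(1/2):ℝ)..0, u ^ n * η u) + ∫ u in (0:ℝ)..(1/2), u ^ n * η u = 0 := by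
      rw [hadd, ← h2, h0]
    linarith
  set F : ℝ → ℝ := fun u => η u * ψ (t + a⁻¹ * u) with hF
  have hcomp : (fun y => η (a * (y - t)) * ψ y) = fun y => F (a * (y - t)) := by
    funext y
    rw [hF]
    simp only
    congr 2
    field_simp
    ring
  have hcov : ∫ y : ℝ, F (a * (y - t)) = a⁻¹ * ∫ u : ℝ, F u := by
    have h1 : (fun y : ℝ => F (a * (y - t))) = fun y : ℝ => (fun z : ℝ => F (a * z)) (y - t) := rfl
    rw [h1, integral_sub_right_eq_self (fun z : ℝ => F (a * z)) t,
      MeasureTheory.Measure.integral_comp_mul_left F a, abs_of_pos hainv0, smul_eq_mul]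
  have hFval : ∫ u : ℝ, F u = d * a⁻¹ ^ n * ∫ u in (0:ℝ)..(1/2), u ^ n * η u := by
    have hFeq : F = fun u => R.eval u * η u
        + (d * a⁻¹ ^ n) * Set.indicator (Set.Ici (0:ℝ)) (fun v => v ^ n * η v) u := by
      funext u
      rw [hF]
      exact key u
    rw [hFeq, MeasureTheory.integral_add HR (Hind.const_mul _),
      MeasureTheory.integral_const_mul, hIici,
      aux_moment n η hη hsupp hηmom R (le_trans hdegR (by omega))]
    ring
  have hz : a ^ (-((n:ℤ)+1)) = a⁻¹ ^ (n+1) := by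
    have : -((n:ℤ)+1) = -(((n+1:ℕ)):ℤ) := by push_cast; ring
    rw [this, zpow_neg, zpow_natCast, inv_pow]
  calc ∫ y : ℝ, η (a * (y - t)) * ψ y
      = ∫ y : ℝ, F (a * (y - t)) := by rw [hcomp]
    _ = a⁻¹ * ∫ u : ℝ, F u := hcov
    _ = a⁻¹ * (d * a⁻¹ ^ n * ∫ u in (0:ℝ)..(1/2), u ^ n * η u) := by rw [hFval]
    _ = a ^ (-((n:ℤ)+1)) *
          (A (lam - 1) * (∫ u in (-(1 / 2) : ℝ)..0, u ^ n * η u) +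
           A lam * ∫ u in (0 : ℝ)..(1 / 2), u ^ n * η u) := by
        rw [hz, hKI, hd]
        ring
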